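/- Let 1/2 < C ≤ 1 and define sequences by ḇ⁰ = 0, b̄⁰ = 1, ḇⁱ = (1/C + 1 − b̄^{i−1})/2 and b̄ⁱ = (1/C + 1 − ḇ^{i−1})/2 for i ≥ 1. Then both sequences (ḇⁱ) and (b̄ⁱ) converge to 1/(3C) + 1/3 as i → ∞. -/

import Mathlib

/-- The iterated-elimination interval endpoints both converge to `1/(3C) + 1/3`. -/
theorem iterated_dominance_converges (C : ℝ) (hC1 : 1/2 < C) (hC2 : C ≤ 1)
    (lb ub : ℕ → ℝ) (hlb0 : lb 0 = 0) (hub0 : ub 0 = 1)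
    (hlb : ∀ i : ℕ, lb (i+1) = (1/C + 1 - ub i)/2)
    (hub : ∀ i : ℕ, ub (i+1) = (1/C + 1 - lb i)/2) :
    Filter.Tendsto lb Filter.atTop (nhds (1/(3*C) + 1/3)) ∧
    Filter.Tendsto ub Filter.atTop (nhds (1/(3*C) + 1/3)) := by
  have hC0 : C ≠ 0 := by positivity
  set L : ℝ := 1/(3*C) + 1/3 with hL
  have hfix : (1/C + 1 - L)/2 = L := by
    field_simp [hL]
    rw [hL]
    field_simp
    ring
  set M : ℝ := max |lb 0 - L| |ub 0 - L| with hM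
  have key : ∀ i : ℕ, |lb i - L| ≤ M * (1/2)^i ∧ |ub i - L| ≤ M * (1/2)^i := by
    intro i
    induction i with
    | zero => simp [hM, le_max_left, le_max_right]
    | succ n ih =>
      obtain ⟨h1, h2⟩ := ih
      constructor
      · have : lb (n+1) - L = -(ub n - L)/2 := by
          rw [hlb n, ← hfix]; ring
        rw [this]
        rw [abs_div, abs_neg]
        rw [pow_succ]
        rw [abs_of_nonneg (by norm_num : (0:ℝ) ≤ 2)]
        nlinarith [abs_nonneg (ub n - L)]
      · have : ub (n+1) - L = -(lb n - L)/2 := by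
          rw [hub n, ← hfix]; ring
        rw [this]
        rw [abs_div, abs_neg]
        rw [pow_succ]
        rw [abs_of_nonneg (by norm_num : (0:ℝ) ≤ 2)]
        nlinarith [abs_nonneg (lb n - L)]
  have hgeo : Filter.Tendsto (fun i : ℕ => M * (1/2:ℝ)^i) Filter.atTop (nhds 0) := by
    simpa using (tendsto_pow_atTop_nhds_zero_of_lt_one (by norm_num) (by norm_num : (1/2:ℝ) < 1)).const_mul M
  constructor
  · have := squeeze_zero_norm (f := fun n => lb n - L) (fun n => by simpa [Real.norm_eq_abs] using (key n).1) hgeo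
    simpa using this.add_const L
  · have := squeeze_zero_norm (f := fun n => ub n - L) (fun n => by simpa [Real.norm_eq_abs] using (key n).2) hgeo
    simpa using this.add_const L
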